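/- Let D be a nonempty open subset of the open unit disk B², and let x be a point with x ∈ D and −x ∈ D. Then s_D(x, −x) ≥ |x|. -/

import Mathlib

open Metric Set Real

/-- The triangular ratio metric of `G`. -/
noncomputable def sMet {E : Type*} [MetricSpace E] (G : Set E) (x y : E) : ℝ :=
  sSup ((fun z => dist x y / (dist x z + dist z y)) '' frontier G)

/-- The Cassinian metric of `G`. -/
noncomputable def cMet {E : Type*} [MetricSpace E] (G : Set E) (x y : E) : ℝ :=
  sSup ((fun z => dist x y / (dist x z * dist z y)) '' frontier G)

/-- The distance ratio metric of `G`. -/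
noncomputable def jMet {E : Type*} [MetricSpace E] (G : Set E) (x y : E) : ℝ :=
  Real.log (1 + dist x y / min (infDist x (frontier G)) (infDist y (frontier G)))

/-- A preconnected set meeting an open set `D` and its complement meets `frontier D`. -/
lemma aux_frontier_hit {X : Type*} [TopologicalSpace X] {S D : Set X}
    (hS : IsPreconnected S) (hD : IsOpen D) {a b : X} (ha : a ∈ S) (haD : a ∈ D)
    (hb : b ∈ S) (hbD : b ∉ D) : (S ∩ frontier D).Nonempty := by
  by_contra h
  rw [Set.not_nonempty_iff_eq_empty] at h
  have hsub : S ⊆ D ∪ (closure D)ᶜ := by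
    intro z hz
    by_cases hzD : z ∈ D
    · exact Or.inl hzD
    · refine Or.inr fun hzc => ?_
      have : z ∈ frontier D := by
        rw [frontier, hD.interior_eq]
        exact ⟨hzc, hzD⟩
      exact absurd (Set.mem_inter hz this) (by simp [h])
  have hbc : b ∈ (closure D)ᶜ := by
    intro hbc
    have : b ∈ frontier D := by
      rw [frontier, hD.interior_eq]; exact ⟨hbc, hbD⟩
    exact absurd (Set.mem_inter hb this) (by simp [h])
  obtain ⟨z, _, hz1, hz2⟩ := hS D (closure D)ᶜ hD isClosed_closure.isOpen_compl hsub
    ⟨a, ha, haD⟩ ⟨b, hb, hbc⟩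
  exact hz2 (subset_closure hz1)

/-- for a nonempty open `D ⊆ B²` and `x` with `x ∈ D` and `−x ∈ D`,
`s_D(x, −x) ≥ |x|`. -/
theorem sMet_antipodal_ge (D : Set ℂ) (hDne : D.Nonempty) (hDopen : IsOpen D)
    (hDsub : D ⊆ Metric.ball (0 : ℂ) 1) (x : ℂ) (hx : x ∈ D) (hx' : -x ∈ D) :
    ‖x‖ ≤ sMet D x (-x) := by
  have hbdd : BddAbove ((fun z => dist x (-x) / (dist x z + dist z (-x))) '' frontier D) := by
    refine ⟨1, ?_⟩
    rintro _ ⟨z, hz, rfl⟩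
    by_cases hden : dist x z + dist z (-x) = 0
    · simp [hden]
    · exact div_le_one_of_le₀ (dist_triangle x z (-x))
        (by positivity)
  by_cases hx0 : x = 0
  · subst hx0
    simp only [norm_zero]
    apply Real.sSup_nonneg
    rintro _ ⟨z, hz, rfl⟩
    positivity
  · set n := ‖x‖ with hn
    have hn0 : 0 < n := norm_pos_iff.mpr hx0
    have hn1 : n < 1 := by simpa using hDsub hx
    have hninv : 1 ≤ n⁻¹ := by
      have h1 : n * n⁻¹ = 1 := mul_inv_cancel₀ hn0.ne'
      nlinarith
    set u : ℂ := (n⁻¹ : ℝ) • x with hu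
    have hu_norm : ‖u‖ = 1 := by
      rw [hu, norm_smul, Real.norm_eq_abs, abs_inv, abs_of_pos hn0]
      exact inv_mul_cancel₀ hn0.ne'
    have huD : u ∉ D := fun h => by
      have h2 := hDsub h
      rw [mem_ball, dist_zero_right, hu_norm] at h2
      exact lt_irrefl 1 h2
    obtain ⟨z, hzseg, hzfr⟩ := aux_frontier_hit (convex_segment x u).isPreconnected hDopen
      (left_mem_segment ℝ x u) hx (right_mem_segment ℝ x u) huD
    obtain ⟨a, b, ha, hb, hab, hz⟩ := hzseg
    obtain ⟨s, hs⟩ : ∃ s : ℝ, s = a + b * n⁻¹ := ⟨_, rfl⟩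
    have hzx : z = s • x := by
      rw [← hz, hu, smul_smul, hs, add_smul]
    have hs1 : 1 ≤ s := by
      have h2 : b * 1 ≤ b * n⁻¹ := mul_le_mul_of_nonneg_left hninv hb
      rw [hs]; linarith
    have hs0 : 0 < s := lt_of_lt_of_le one_pos hs1
    have hz_norm : ‖z‖ = s * n := by
      rw [hzx, norm_smul, Real.norm_eq_abs, abs_of_pos hs0]
    have hz_le : ‖z‖ ≤ 1 := by
      have h1 : z ∈ closure D := frontier_subset_closure hzfr
      have h2 : closure D ⊆ closedBall (0 : ℂ) 1 :=
        (closure_mono hDsub).trans Metric.closure_ball_subset_closedBall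
      simpa [mem_closedBall, dist_eq_norm] using h2 h1
    have hxz : dist x z = (s - 1) * n := by
      rw [dist_eq_norm, hzx]
      have h3 : x - s • x = (1 - s) • x := by module
      rw [h3, norm_smul, Real.norm_eq_abs, abs_of_nonpos (by linarith)]
      ring_nf
      rw [hn]
    have hzx' : dist z (-x) = (s + 1) * n := by
      rw [dist_eq_norm, hzx, sub_neg_eq_add]
      have h3 : s • x + x = (s + 1) • x := by module
      rw [h3, norm_smul, Real.norm_eq_abs, abs_of_pos (by linarith)]
    have hxx : dist x (-x) = 2 * n := by
      rw [dist_eq_norm, sub_neg_eq_add, ← two_smul ℝ x, norm_smul]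
      simp [hn]
    have key : n ≤ dist x (-x) / (dist x z + dist z (-x)) := by
      rw [hxx, hxz, hzx']
      have hden : (s - 1) * n + (s + 1) * n = 2 * s * n := by ring
      rw [hden, le_div_iff₀ (by positivity)]
      have hsn : s * n ≤ 1 := by rw [← hz_norm]; exact hz_le
      nlinarith
    calc n ≤ dist x (-x) / (dist x z + dist z (-x)) := key
      _ ≤ sMet D x (-x) := le_csSup hbdd ⟨z, hzfr, rfl⟩
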